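/- Let ζ ∈ ℂ be a primitive 16th root of unity, σ(x, y, t) = (ζ⁶x, ζ⁹y, ζ⁴t), and σ_AST(x, y, t) = (ζ⁶(y² − x³)/x², ζ⁹(x³y − y³)/x³, ζ⁴t). If (x, y, t) satisfies y² = x³ + t³(t⁴ − 1)x, x ≠ 0, and t³(t⁴ − 1) ≠ 0, then σ_AST(σ_AST(x, y, t)) = σ(σ(x, y, t)). In other words, the two non-symplectic automorphisms of order 16 are distinct factorizations (square roots) of the same automorphism of order 8. -/

import Mathlib

/-- The two non-symplectic automorphisms `σ` and `σ_AST` of order 16 are distinct square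
roots of the same order 8 automorphism: `σ_AST² = σ²` on the smooth locus. -/
theorem stmt_10 (ζ : ℂ) (hζ : IsPrimitiveRoot ζ 16)
    (σ σAST : ℂ × ℂ × ℂ → ℂ × ℂ × ℂ)
    (hσ : ∀ x y t : ℂ, σ (x, y, t) = (ζ ^ 6 * x, ζ ^ 9 * y, ζ ^ 4 * t))
    (hσAST : ∀ x y t : ℂ, σAST (x, y, t) =
      (ζ ^ 6 * ((y ^ 2 - x ^ 3) / x ^ 2), ζ ^ 9 * ((x ^ 3 * y - y ^ 3) / x ^ 3), ζ ^ 4 * t))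
    (x y t : ℂ) (h : y ^ 2 = x ^ 3 + t ^ 3 * (t ^ 4 - 1) * x) (hx : x ≠ 0)
    (ht : t ^ 3 * (t ^ 4 - 1) ≠ 0) :
    σAST (σAST (x, y, t)) = σ (σ (x, y, t)) := by
  have hζ0 : ζ ≠ 0 := hζ.ne_zero (by norm_num)
  set c : ℂ := t ^ 3 * (t ^ 4 - 1) with hc
  have h1 : σAST (x, y, t) = (ζ ^ 6 * (c / x), ζ ^ 9 * (-(c * y) / x ^ 2), ζ ^ 4 * t) := by
    rw [hσAST]
    refine Prod.ext ?_ (Prod.ext ?_ rfl) <;> simp only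
    · congr 1
      field_simp
      linear_combination h
    · congr 1
      field_simp
      linear_combination (-y) * h
  have h2 : σAST (ζ ^ 6 * (c / x), ζ ^ 9 * (-(c * y) / x ^ 2), ζ ^ 4 * t)
      = (ζ ^ 12 * x, ζ ^ 18 * y, ζ ^ 8 * t) := by
    rw [hσAST]
    have hX : ζ ^ 6 * (c / x) ≠ 0 :=
      mul_ne_zero (pow_ne_zero _ hζ0) (div_ne_zero ht hx)
    refine Prod.ext ?_ (Prod.ext ?_ ?_) <;> simp only
    · field_simp
      linear_combination h
    · rw [mul_div_assoc', div_eq_iff (pow_ne_zero 3 hX)]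
      field_simp
      linear_combination y * h
    · ring
  rw [h1, h2, hσ, hσ]
  refine Prod.ext ?_ (Prod.ext ?_ ?_) <;> simp only <;> ring
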